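/- Let G be a group containing a subgroup isomorphic to the free group on two generators (equivalently, there is an injective group homomorphism from the free group on a two-element type into G). Then G has no solvable subgroup of finite index; in particular, G is not virtually solvable and hence not virtually polycyclic. -/

import Mathlib

/-- The free group on two generators is not solvable. -/
private lemma freeGroup_fin2_not_solvable : ¬ IsSolvable (FreeGroup (Fin 2)) := by
  intro h
  set σ : Equiv.Perm (Fin 5) := finRotate 5 with hσ
  set τ : Equiv.Perm (Fin 5) := Equiv.swap 0 (σ 0) with hτ
  let φ : FreeGroup (Fin 2) →* Equiv.Perm (Fin 5) := FreeGroup.lift ![σ, τ]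
  have hrange : Set.range ![σ, τ] = {σ, τ} := by
    ext x
    constructor
    · rintro ⟨i, rfl⟩; fin_cases i <;> simp
    · rintro (rfl | rfl)
      exacts [⟨0, rfl⟩, ⟨1, rfl⟩]
  set_option linter.unnecessarySimpa false in
  have hsurj : Function.Surjective φ := by
    rw [← MonoidHom.range_eq_top,
      show φ.range = _ from FreeGroup.range_lift_eq_closure, hrange]
    exact Equiv.Perm.closure_cycle_adjacent_swap isCycle_finRotate
      (by simp [support_finRotate]) 0
  exact Equiv.Perm.fin_5_not_solvable (haveI : Group.IsSolvable (FreeGroup (Fin 2)) := h; solvable_of_surjective hsurj)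

private def uA : (Matrix (Fin 3) (Fin 3) ℤ)ˣ :=
  ⟨!![1,1,0;0,1,0;0,0,1], !![1,-1,0;0,1,0;0,0,1],
    by norm_num [Matrix.mul_fin_three]; exact Matrix.one_fin_three.symm,
    by norm_num [Matrix.mul_fin_three]; exact Matrix.one_fin_three.symm⟩

private def uB : (Matrix (Fin 3) (Fin 3) ℤ)ˣ :=
  ⟨!![1,0,0;0,1,1;0,0,1], !![1,0,0;0,1,-1;0,0,1],
    by norm_num [Matrix.mul_fin_three]; exact Matrix.one_fin_three.symm,
    by norm_num [Matrix.mul_fin_three]; exact Matrix.one_fin_three.symm⟩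

private lemma uA_pow (m : ℕ) :
    ((uA ^ m : (Matrix (Fin 3) (Fin 3) ℤ)ˣ) : Matrix (Fin 3) (Fin 3) ℤ) =
      !![1,(m:ℤ),0;0,1,0;0,0,1] := by
  induction m with
  | zero => simp [Matrix.one_fin_three]
  | succ m ih =>
    rw [pow_succ, Units.val_mul, ih]
    show _ * (uA : Matrix (Fin 3) (Fin 3) ℤ) = _
    rw [show (uA : Matrix (Fin 3) (Fin 3) ℤ) = !![1,1,0;0,1,0;0,0,1] from rfl]
    norm_num [Matrix.mul_fin_three, add_comm]

private lemma uB_pow (n : ℕ) :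
    ((uB ^ n : (Matrix (Fin 3) (Fin 3) ℤ)ˣ) : Matrix (Fin 3) (Fin 3) ℤ) =
      !![1,0,0;0,1,(n:ℤ);0,0,1] := by
  induction n with
  | zero => simp [Matrix.one_fin_three]
  | succ n ih =>
    rw [pow_succ, Units.val_mul, ih]
    show _ * (uB : Matrix (Fin 3) (Fin 3) ℤ) = _
    rw [show (uB : Matrix (Fin 3) (Fin 3) ℤ) = !![1,0,0;0,1,1;0,0,1] from rfl]
    norm_num [Matrix.mul_fin_three, add_comm]

/-- Nonzero powers of the two generators of the free group do not commute. -/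
private lemma not_commute_pow {m n : ℕ} (hm : m ≠ 0) (hn : n ≠ 0) :
    ¬ Commute ((FreeGroup.of (0 : Fin 2)) ^ m) ((FreeGroup.of (1 : Fin 2)) ^ n) := by
  intro hc
  let φ : FreeGroup (Fin 2) →* (Matrix (Fin 3) (Fin 3) ℤ)ˣ := FreeGroup.lift ![uA, uB]
  have hc' : Commute (uA ^ m) (uB ^ n) := by
    have := hc.map φ
    simpa [φ, FreeGroup.lift_apply_of] using this
  have hval := congrArg (fun u : (Matrix (Fin 3) (Fin 3) ℤ)ˣ =>
    (u : Matrix (Fin 3) (Fin 3) ℤ) 0 2) hc'.eq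
  simp only [Units.val_mul, uA_pow, uB_pow] at hval
  rw [Matrix.mul_fin_three, Matrix.mul_fin_three] at hval
  norm_num at hval
  simp only [Matrix.cons_val_two, Matrix.tail_cons, Matrix.head_cons] at hval
  rcases mul_eq_zero.mp hval with h | h
  · exact hm (by exact_mod_cast h)
  · exact hn (by exact_mod_cast h)

/-- The free group on a subsingleton type is commutative. -/
private lemma freeGroup_comm_of_subsingleton {S : Type*} [Subsingleton S]
    (x y : FreeGroup S) : Commute x y := by
  have base : ∀ (y : FreeGroup S) (a : S), Commute (FreeGroup.of a) y := by
    intro y a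
    induction y with
    | C1 => exact Commute.one_right _
    | of b => rw [Subsingleton.elim a b]
    | inv_of b hb => exact hb.inv_right
    | mul y z hy hz => exact hy.mul_right hz
  induction x with
  | C1 => exact Commute.one_left _
  | of a => exact base y a
  | inv_of a ha => exact ha.inv_left
  | mul x z hx hz => exact hx.mul_left hz

/-- If a group `G` contains a subgroup isomorphic to the free group on two generators
(i.e., there is an injective group homomorphism from the free group on a two-element type
into `G`), then `G` has no solvable subgroup of finite index; in particular, `G` is not
virtually solvable and hence not virtually polycyclic. -/
theorem no_finite_index_solvable_subgroup_of_contains_free_group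
    {G : Type*} [Group G] (f : FreeGroup (Fin 2) →* G) (hf : Function.Injective f)
    (H : Subgroup G) (hH : H.index ≠ 0) :
    ¬ IsSolvable H := by
  intro hsolv
  haveI : Group.IsSolvable H := hsolv
  haveI : H.FiniteIndex := ⟨hH⟩
  set K : Subgroup (FreeGroup (Fin 2)) := H.comap f with hK
  -- K is solvable, as it embeds into H
  haveI hKsolv : Group.IsSolvable K := by
    refine solvable_of_solvable_injective
      (f := (f.comp K.subtype).codRestrict H (fun x => x.2)) ?_
    intro a b hab
    have : f a.1 = f b.1 := congrArg Subtype.val hab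
    exact Subtype.ext (hf this)
  -- K has finite index
  have hKind : K.index ≠ 0 := by
    rw [Subgroup.index_comap]
    exact (Subgroup.instFiniteIndex_subgroupOf H f.range).index_ne_zero
  obtain ⟨m, hm0, -, hmK⟩ :=
    Subgroup.exists_pow_mem_of_index_ne_zero hKind (FreeGroup.of (0 : Fin 2))
  obtain ⟨n, hn0, -, hnK⟩ :=
    Subgroup.exists_pow_mem_of_index_ne_zero hKind (FreeGroup.of (1 : Fin 2))
  -- by Nielsen–Schreier, K is a free group
  haveI : IsFreeGroup K := inferInstance
  set e : K ≃* FreeGroup (IsFreeGroup.Generators K) := IsFreeGroup.toFreeGroup K with he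
  -- the generators of K cannot form a subsingleton type
  have hns : ¬ Subsingleton (IsFreeGroup.Generators K) := by
    intro hs
    refine not_commute_pow hm0.ne' hn0.ne' ?_
    have h1 : Commute (e (⟨_, hmK⟩ : K)) (e (⟨_, hnK⟩ : K)) :=
      freeGroup_comm_of_subsingleton _ _
    have h2 : Commute (⟨_, hmK⟩ : K) (⟨_, hnK⟩ : K) := by
      have := h1.map (e.symm : FreeGroup (IsFreeGroup.Generators K) →* K)
      simpa using this
    simpa using h2.map K.subtype
  rw [not_subsingleton_iff_nontrivial] at hns
  obtain ⟨a, b, hab⟩ := exists_pair_ne (IsFreeGroup.Generators K)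
  -- embed the free group on two generators into K
  let g : Fin 2 → IsFreeGroup.Generators K := ![a, b]
  have hg : Function.Injective (FreeGroup.map g) := by
    letI := Classical.decEq (IsFreeGroup.Generators K)
    let r : IsFreeGroup.Generators K → Fin 2 := fun s => if s = a then 0 else 1
    have hleft : ∀ x : FreeGroup (Fin 2), FreeGroup.map r (FreeGroup.map g x) = x := by
      intro x
      rw [FreeGroup.map.comp]
      have : (r ∘ g) = id := by
        funext i
        fin_cases i <;> simp [r, g, Ne.symm hab]
      rw [this, FreeGroup.map.id]
    exact Function.LeftInverse.injective hleft
  have hψ : Function.Injective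
      ((e.symm : FreeGroup (IsFreeGroup.Generators K) →* K).comp (FreeGroup.map g)) := by
    intro x y hxy
    exact hg (e.symm.injective hxy)
  exact freeGroup_fin2_not_solvable (solvable_of_solvable_injective hψ)
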